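/- For distinct natural numbers a, b, let δ(a, b) denote the largest index i such that the i-th binary digits of a and b differ. Let ε₁ < ε₂ < ⋯ < ε_h be natural numbers and set δ_l = δ(ε_l, ε_{l+1}) for 1 ≤ l ≤ h − 1. Then (i) δ_l ≠ δ_{l+1} for every 1 ≤ l ≤ h − 2, and (ii) for all 1 ≤ i < j ≤ h, δ(ε_i, ε_j) = max{δ_l : i ≤ l ≤ j − 1}. -/

import Mathlib

/-- `stepDelta a b` is the largest index `i` such that the `i`-th binary digits of `a` and `b`
differ; equivalently `⌊log₂ (a XOR b)⌋`. -/
def stepDelta (a b : ℕ) : ℕ := Nat.log 2 (a ^^^ b)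

lemma testBit_log_self {n : ℕ} (hn : n ≠ 0) : n.testBit (Nat.log 2 n) = true := by
  have h1 : 2 ^ Nat.log 2 n ≤ n := Nat.pow_log_le_self 2 hn
  have h2 : n < 2 ^ (Nat.log 2 n + 1) := Nat.lt_pow_succ_log_self (by norm_num) n
  rw [Nat.testBit_eq_decide_div_mod_eq]
  have hd : n / 2 ^ Nat.log 2 n = 1 := by
    apply Nat.div_eq_of_lt_le
    · simpa using h1
    · rw [pow_succ] at h2
      omega
  simp [hd]

lemma testBit_eq_of_log_lt {n j : ℕ} (hj : Nat.log 2 n < j) : n.testBit j = false := by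
  apply Nat.testBit_eq_false_of_lt
  calc n < 2 ^ (Nat.log 2 n + 1) := Nat.lt_pow_succ_log_self (by norm_num) n
    _ ≤ 2 ^ j := Nat.pow_le_pow_right (by norm_num) hj

lemma stepDelta_high {a b j : ℕ} (hj : stepDelta a b < j) : a.testBit j = b.testBit j := by
  have := testBit_eq_of_log_lt (n := a ^^^ b) hj
  rw [Nat.testBit_xor] at this
  cases ha : a.testBit j <;> cases hb : b.testBit j <;> simp_all

lemma stepDelta_bits {a b : ℕ} (hab : a < b) :
    a.testBit (stepDelta a b) = false ∧ b.testBit (stepDelta a b) = true := by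
  have hx : a ^^^ b ≠ 0 := by
    simp only [ne_eq, Nat.xor_eq_zero_iff]
    omega
  have ht : (a ^^^ b).testBit (stepDelta a b) = true := testBit_log_self hx
  rw [Nat.testBit_xor] at ht
  cases ha : a.testBit (stepDelta a b) <;> cases hb : b.testBit (stepDelta a b) <;>
    simp [ha, hb] at ht ⊢
  exact absurd (Nat.lt_of_testBit _ hb ha fun j hj => (stepDelta_high hj).symm) (by omega)

lemma stepDelta_ne {a b c : ℕ} (hab : a < b) (hbc : b < c) :
    stepDelta a b ≠ stepDelta b c := by
  intro heq
  have h1 := (stepDelta_bits hab).2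
  have h2 := (stepDelta_bits hbc).1
  rw [heq] at h1
  rw [h1] at h2
  exact absurd h2 (by simp)

lemma ge_two_pow_of_testBit' {n i : ℕ} (h : n.testBit i = true) : 2 ^ i ≤ n := by
  by_contra hlt
  rw [Nat.testBit_eq_false_of_lt (by omega)] at h
  exact absurd h (by simp)

lemma log_xor (x y : ℕ) (hx : x ≠ 0) (hy : y ≠ 0) (hne : Nat.log 2 x ≠ Nat.log 2 y) :
    Nat.log 2 (x ^^^ y) = max (Nat.log 2 x) (Nat.log 2 y) := by
  wlog hlt : Nat.log 2 y < Nat.log 2 x generalizing x y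
  · rw [Nat.xor_comm, max_comm]
    exact this y x hy hx hne.symm (by omega)
  apply Nat.log_eq_of_pow_le_of_lt_pow
  · apply ge_two_pow_of_testBit'
    have hm : Nat.log 2 x ⊔ Nat.log 2 y = Nat.log 2 x := max_eq_left hlt.le
    rw [hm, Nat.testBit_xor, testBit_log_self hx,
      testBit_eq_of_log_lt (by simpa using hlt)]
    simp
  · have h1 : x < 2 ^ (max (Nat.log 2 x) (Nat.log 2 y) + 1) := by
      calc x < 2 ^ (Nat.log 2 x + 1) := Nat.lt_pow_succ_log_self (by norm_num) x
        _ ≤ _ := Nat.pow_le_pow_right (by norm_num) (by omega)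
    have h2 : y < 2 ^ (max (Nat.log 2 x) (Nat.log 2 y) + 1) := by
      calc y < 2 ^ (Nat.log 2 y + 1) := Nat.lt_pow_succ_log_self (by norm_num) y
        _ ≤ _ := Nat.pow_le_pow_right (by norm_num) (by omega)
    exact Nat.xor_lt_two_pow h1 h2

lemma stepDelta_trans {a b c : ℕ} (hab : a < b) (hbc : b < c) :
    stepDelta a c = max (stepDelta a b) (stepDelta b c) := by
  have hx : a ^^^ b ≠ 0 := by simp only [ne_eq, Nat.xor_eq_zero_iff]; omega
  have hy : b ^^^ c ≠ 0 := by simp only [ne_eq, Nat.xor_eq_zero_iff]; omega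
  have hac : a ^^^ c = (a ^^^ b) ^^^ (b ^^^ c) := by
    rw [Nat.xor_assoc, ← Nat.xor_assoc b b c, Nat.xor_self, Nat.zero_xor]
  unfold stepDelta
  rw [hac]
  exact log_xor _ _ hx hy (stepDelta_ne hab hbc)

/-- let `ε₁ < ε₂ < ⋯ < ε_h` be natural numbers and `δ_l = stepDelta ε_l ε_{l+1}`.
Then (i) `δ_l ≠ δ_{l+1}` for `1 ≤ l ≤ h - 2`, and (ii) for `1 ≤ i < j ≤ h`,
`stepDelta ε_i ε_j = max {δ_l : i ≤ l ≤ j - 1}`. -/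
theorem stmt_13 (h : ℕ) (ε : ℕ → ℕ)
    (hmono : ∀ l : ℕ, 1 ≤ l → l < h → ε l < ε (l + 1)) :
    (∀ l : ℕ, 1 ≤ l → l ≤ h - 2 →
      stepDelta (ε l) (ε (l + 1)) ≠ stepDelta (ε (l + 1)) (ε (l + 2))) ∧
    (∀ i j : ℕ, 1 ≤ i → i < j → j ≤ h →
      stepDelta (ε i) (ε j) =
        (Finset.Icc i (j - 1)).sup fun l => stepDelta (ε l) (ε (l + 1))) := by
  have hlt : ∀ p q : ℕ, 1 ≤ p → p < q → q ≤ h → ε p < ε q := by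
    intro p q hp hpq hq
    have key : ∀ d : ℕ, p + d + 1 ≤ h → ε p < ε (p + d + 1) := by
      intro d
      induction d with
      | zero => intro hd; exact hmono p hp (by omega)
      | succ n ih =>
        intro hd
        have h1 := hmono (p + n + 1) (by omega) (by omega)
        have h2 := ih (by omega)
        have he : p + (n + 1) + 1 = (p + n + 1) + 1 := by omega
        rw [he]
        omega
    have hd := key (q - p - 1) (by omega)
    have he : p + (q - p - 1) + 1 = q := by omega
    rwa [he] at hd
  constructor
  · intro l hl1 hl2
    exact stepDelta_ne (hmono l hl1 (by omega)) (hmono (l + 1) (by omega) (by omega))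
  · intro i j hi hij hjh
    induction j with
    | zero => omega
    | succ j ih =>
      rcases Nat.lt_or_ge i j with hij' | hij'
      · have hj1 : 1 ≤ j := by omega
        have key := stepDelta_trans (hlt i j hi hij' (by omega)) (hmono j hj1 (by omega))
        rw [key, ih hij' (by omega)]
        have hins : Finset.Icc i (j + 1 - 1) = insert j (Finset.Icc i (j - 1)) := by
          ext x
          simp only [Finset.mem_Icc, Finset.mem_insert]
          omega
        rw [hins, Finset.sup_insert, max_comm]
      · have hji : j = i := by omega
        subst hji
        simp
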